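/- Theorem 4.2(iii), two-sided truncation: let −∞ < a < b < ∞ and assume Ξ̂₁(0, b) − Ξ̂₁(0, a) > 0. Then as θ → ∞, θ e^{-θ b} M̃_{1,(a,b)}(θ) → f̂₀(b) / (Ξ̂₁(0, b) − Ξ̂₁(0, a)); that is, M̃_{1,(a,b)}(θ) ∼ θ^{-1} e^{θ b} f̂₀(b) / (Ξ̂₁(0, b) − Ξ̂₁(0, a)), where f̂₀(b) = (2π K₀''(t_b))^{-1/2} exp(K₀(t_b) − t_b b) is the saddlepoint density approximation at b. -/

import Mathlib

open MeasureTheory Set Filter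

/-- The filter on ℝ describing approach to the (possibly infinite) left endpoint
`-α` of the convergence strip from the right: `s ↓ -α`. -/
noncomputable def towardsLowerEndpoint (α : EReal) : Filter ℝ :=
  Filter.comap (fun s : ℝ => (s : EReal)) (nhdsWithin (-α) (Set.Ioi (-α)))

/-- The filter on ℝ describing approach to the (possibly infinite) right endpoint
`β` of the convergence strip from the left: `s ↑ β`. -/
noncomputable def towardsUpperEndpoint (β : EReal) : Filter ℝ :=
  Filter.comap (fun s : ℝ => (s : EReal)) (nhdsWithin β (Set.Iio β))

/-- The saddlepoint approximation (equation (26)) to the exponential convolution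
integral: `Ξ̂₁(θ, y) = [2π(1 + (θ − s)² K₀''(s))]^{-1/2} exp(K₀(s) − (s − θ)y)`,
evaluated at the saddlepoint `s = s_{1,θ}`. -/
noncomputable def XiHat (K₀ : ℝ → ℝ) (θ y s : ℝ) : ℝ :=
  (Real.sqrt (2 * Real.pi * (1 + (θ - s) ^ 2 * deriv (deriv K₀) s)))⁻¹ *
    Real.exp (K₀ s - (s - θ) * y)

/-- The saddlepoint density approximation
`f̂₀(y) = (2π K₀''(t_y))^{-1/2} exp(K₀(t_y) − t_y y)`. -/
noncomputable def fhatSP (K₀ : ℝ → ℝ) (y t : ℝ) : ℝ :=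
  (Real.sqrt (2 * Real.pi * deriv (deriv K₀) t))⁻¹ * Real.exp (K₀ t - t * y)

lemma xi_key (K₀ : ℝ → ℝ) (α β : EReal) (hα : 0 < α)
    (hsmooth : ContDiffOn ℝ 2 K₀ {s : ℝ | -α < (s : EReal) ∧ (s : EReal) < β})
    (hconv : ∀ s : ℝ, -α < (s : EReal) → (s : EReal) < β → 0 < deriv (deriv K₀) s)
    (y t : ℝ) (ht₁ : -α < (t : EReal)) (ht₂ : (t : EReal) < β)
    (hty : deriv K₀ t = y)
    (s : ℝ → ℝ)
    (hs : ∀ θ : ℝ, -α < (θ : EReal) →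
        (-α < (s θ : EReal) ∧ (s θ : EReal) < β ∧ s θ < θ) ∧
          deriv K₀ (s θ) + (θ - s θ)⁻¹ = y) :
    Tendsto (fun θ : ℝ => θ * Real.exp (-θ * y) * XiHat K₀ θ y (s θ))
      atTop (nhds (fhatSP K₀ y t)) := by
  set S := {s : ℝ | -α < (s : EReal) ∧ (s : EReal) < β} with hSdef
  have hα0 : (-α : EReal) < 0 := by
    have := EReal.neg_lt_neg_iff.mpr hα  -- guess
    simpa using this
  have hSopen : IsOpen S := by
    have : S = (fun x : ℝ => (x : EReal)) ⁻¹' (Set.Ioo (-α) β) := rfl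
    rw [this]; exact isOpen_Ioo.preimage continuous_coe_real_ereal
  have htS : t ∈ S := ⟨ht₁, ht₂⟩
  have hconvex : Convex ℝ S := by
    apply Set.OrdConnected.convex
    constructor
    intro x hx z hz w hw
    constructor
    · exact lt_of_lt_of_le hx.1 (EReal.coe_le_coe_iff.mpr hw.1)
    · exact lt_of_le_of_lt (EReal.coe_le_coe_iff.mpr hw.2) hz.2
  have hcont1 : ContinuousOn (deriv K₀) S :=
    hsmooth.continuousOn_deriv_of_isOpen hSopen (by norm_num)
  have hcont2 : ContinuousOn (deriv (deriv K₀)) S := by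
    have h1 : ContDiffOn ℝ 1 (deriv K₀) S :=
      hsmooth.deriv_of_isOpen hSopen (by norm_num)
    exact h1.continuousOn_deriv_of_isOpen hSopen (by norm_num)
  have hmono : StrictMonoOn (deriv K₀) S := by
    apply strictMonoOn_of_deriv_pos hconvex hcont1
    intro x hx
    rw [hSopen.interior_eq] at hx
    exact hconv x hx.1 hx.2
  have hθα : ∀ θ : ℝ, 0 ≤ θ → -α < (θ : EReal) := by
    intro θ hθ
    refine lt_of_lt_of_le hα0 ?_
    exact_mod_cast hθ
  have hupper : ∀ θ : ℝ, 0 ≤ θ → s θ < t := by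
    intro θ hθ
    obtain ⟨⟨h1, h2, h3⟩, h4⟩ := hs θ (hθα θ hθ)
    by_contra h
    push_neg at h
    have hle : deriv K₀ t ≤ deriv K₀ (s θ) := hmono.monotoneOn htS ⟨h1, h2⟩ h
    have hpos : 0 < (θ - s θ)⁻¹ := inv_pos.mpr (by linarith)
    rw [hty] at hle
    linarith
  have hlim : Tendsto s atTop (nhds t) := by
    rw [tendsto_order]
    constructor
    · intro c hc
      obtain ⟨δ, hδpos, hball⟩ := Metric.isOpen_iff.mp hSopen t htS
      set d := max c (t - δ / 2) with hd
      have hdt : d < t := max_lt hc (by linarith)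
      have hdS : d ∈ S := by
        apply hball
        rw [Metric.mem_ball, Real.dist_eq, abs_lt]
        constructor
        · have : t - δ / 2 ≤ d := le_max_right _ _
          linarith
        · linarith
      have hKd : deriv K₀ d < y := by rw [← hty]; exact hmono hdS htS hdt
      filter_upwards [eventually_ge_atTop (0 : ℝ),
        eventually_gt_atTop (d + (y - deriv K₀ d)⁻¹)] with θ hθ0 hθd
      obtain ⟨⟨h1, h2, h3⟩, h4⟩ := hs θ (hθα θ hθ0)
      have hdinv : 0 < (y - deriv K₀ d)⁻¹ := inv_pos.mpr (by linarith)
      have hθd' : d < θ := by linarith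
      by_contra h
      push_neg at h  -- s θ ≤ c
      have hsd : s θ ≤ d := le_trans h (le_max_left _ _)
      have hle : deriv K₀ (s θ) ≤ deriv K₀ d := hmono.monotoneOn ⟨h1, h2⟩ hdS hsd
      have hi1 : (θ - s θ)⁻¹ ≤ (θ - d)⁻¹ := by
        apply inv_anti₀ (by linarith) (by linarith)
      have hi2 : (θ - d)⁻¹ < y - deriv K₀ d :=
        inv_lt_of_inv_lt₀ (by linarith) (by linarith)
      linarith
    · intro c hc
      filter_upwards [eventually_ge_atTop (0 : ℝ)] with θ h0
      exact lt_trans (hupper θ h0) hc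
  -- limits of compositions
  have hK0 : Tendsto (fun θ => K₀ (s θ)) atTop (nhds (K₀ t)) :=
    ((hsmooth.continuousOn.continuousAt (hSopen.mem_nhds htS)).tendsto).comp hlim
  have hK2 : Tendsto (fun θ => deriv (deriv K₀) (s θ)) atTop
      (nhds (deriv (deriv K₀) t)) :=
    ((hcont2.continuousAt (hSopen.mem_nhds htS)).tendsto).comp hlim
  have hinv0 : Tendsto (fun θ : ℝ => θ⁻¹) atTop (nhds 0) := tendsto_inv_atTop_zero
  have hinner : Tendsto
      (fun θ : ℝ => 2 * Real.pi * ((θ⁻¹) ^ 2 + (1 - s θ * θ⁻¹) ^ 2 * deriv (deriv K₀) (s θ)))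
      atTop (nhds (2 * Real.pi * deriv (deriv K₀) t)) := by
    have h1 : Tendsto (fun θ : ℝ => (θ⁻¹) ^ 2 + (1 - s θ * θ⁻¹) ^ 2 * deriv (deriv K₀) (s θ))
        atTop (nhds ((0:ℝ) ^ 2 + (1 - t * 0) ^ 2 * deriv (deriv K₀) t)) := by
      exact ((hinv0.pow 2).add ((((tendsto_const_nhds.sub (hlim.mul hinv0)).pow 2)).mul hK2))
    have := (tendsto_const_nhds : Tendsto (fun _ : ℝ => 2 * Real.pi) atTop _).mul h1
    simpa using this
  have hK2pos : 0 < deriv (deriv K₀) t := hconv t ht₁ ht₂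
  have hLpos : 0 < 2 * Real.pi * deriv (deriv K₀) t := by positivity
  have hsqrt : Tendsto
      (fun θ : ℝ => (Real.sqrt (2 * Real.pi *
        ((θ⁻¹) ^ 2 + (1 - s θ * θ⁻¹) ^ 2 * deriv (deriv K₀) (s θ))))⁻¹)
      atTop (nhds ((Real.sqrt (2 * Real.pi * deriv (deriv K₀) t))⁻¹)) := by
    have hne : Real.sqrt (2 * Real.pi * deriv (deriv K₀) t) ≠ 0 :=
      ne_of_gt (Real.sqrt_pos.mpr hLpos)
    exact ((Real.continuous_sqrt.tendsto _).comp hinner).inv₀ hne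
  have hexp : Tendsto (fun θ : ℝ => Real.exp (K₀ (s θ) - s θ * y))
      atTop (nhds (Real.exp (K₀ t - t * y))) :=
    (Real.continuous_exp.tendsto _).comp (hK0.sub (hlim.mul_const y))
  have hmain := hsqrt.mul hexp
  have heq : ∀ᶠ θ : ℝ in atTop,
      (Real.sqrt (2 * Real.pi *
        ((θ⁻¹) ^ 2 + (1 - s θ * θ⁻¹) ^ 2 * deriv (deriv K₀) (s θ))))⁻¹ *
        Real.exp (K₀ (s θ) - s θ * y)
      = θ * Real.exp (-θ * y) * XiHat K₀ θ y (s θ) := by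
    filter_upwards [eventually_gt_atTop (0 : ℝ)] with θ hθ
    obtain ⟨⟨h1, h2, h3⟩, _⟩ := hs θ (hθα θ hθ.le)
    have hQ : 0 < deriv (deriv K₀) (s θ) := hconv _ h1 h2
    have hXpos : 0 < 2 * Real.pi * (1 + (θ - s θ) ^ 2 * deriv (deriv K₀) (s θ)) := by
      have h1 := mul_nonneg (sq_nonneg (θ - s θ)) hQ.le
      have h2 : (0:ℝ) < 2 * Real.pi := by positivity
      nlinarith
    have hθne : θ ≠ 0 := ne_of_gt hθ
    have harg : 2 * Real.pi * ((θ⁻¹) ^ 2 + (1 - s θ * θ⁻¹) ^ 2 * deriv (deriv K₀) (s θ))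
        = 2 * Real.pi * (1 + (θ - s θ) ^ 2 * deriv (deriv K₀) (s θ)) / θ ^ 2 := by
      field_simp
    rw [harg, Real.sqrt_div hXpos.le, Real.sqrt_sq hθ.le, inv_div]
    unfold XiHat
    have hexps : Real.exp (-θ * y) * Real.exp (K₀ (s θ) - (s θ - θ) * y)
        = Real.exp (K₀ (s θ) - s θ * y) := by
      rw [← Real.exp_add]; ring_nf
    rw [← hexps]
    ring
  exact hmain.congr' heq

/-- **Theorem 4.2(iii), two-sided truncation**: with `−∞ < a < b < ∞`,
`Ξ̂₁(0, b) − Ξ̂₁(0, a) > 0`, and `s_A, s_B` the exponential-convolution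
saddlepoint functions for `y = a` and `y = b`, the two-sided approximation
`M̃_{1,(a,b)}(θ) = (Ξ̂₁(θ, b) − Ξ̂₁(θ, a))/(Ξ̂₁(0, b) − Ξ̂₁(0, a))` satisfies
`θ e^{-θb} M̃_{1,(a,b)}(θ) → f̂₀(b)/(Ξ̂₁(0, b) − Ξ̂₁(0, a))` as `θ → ∞`, i.e.
`M̃_{1,(a,b)}(θ) ∼ θ⁻¹ e^{θb} f̂₀(b)/(Ξ̂₁(0, b) − Ξ̂₁(0, a))`. -/
theorem exp_convolution_two_sided_mgf_right_tail
    (K₀ : ℝ → ℝ) (α β : EReal) (hα : 0 < α) (hβ : 0 < β)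
    (hsmooth : ContDiffOn ℝ 2 K₀ {s : ℝ | -α < (s : EReal) ∧ (s : EReal) < β})
    (hconv : ∀ s : ℝ, -α < (s : EReal) → (s : EReal) < β → 0 < deriv (deriv K₀) s)
    (hbot : Tendsto (deriv K₀) (towardsLowerEndpoint α) atBot)
    (htop : Tendsto (deriv K₀) (towardsUpperEndpoint β) atTop)
    (a b : ℝ) (hab : a < b)
    (t_a t_b : ℝ) (hta₁ : -α < (t_a : EReal)) (hta₂ : (t_a : EReal) < β)
    (htb₁ : -α < (t_b : EReal)) (htb₂ : (t_b : EReal) < β)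
    (hsa : deriv K₀ t_a = a) (hsb : deriv K₀ t_b = b)
    (sA sB : ℝ → ℝ)
    (hsA : ∀ θ : ℝ, -α < (θ : EReal) →
      (-α < (sA θ : EReal) ∧ (sA θ : EReal) < β ∧ sA θ < θ) ∧
        deriv K₀ (sA θ) + (θ - sA θ)⁻¹ = a)
    (hsB : ∀ θ : ℝ, -α < (θ : EReal) →
      (-α < (sB θ : EReal) ∧ (sB θ : EReal) < β ∧ sB θ < θ) ∧
        deriv K₀ (sB θ) + (θ - sB θ)⁻¹ = b)
    (hden : 0 < XiHat K₀ 0 b (sB 0) - XiHat K₀ 0 a (sA 0)) :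
    Tendsto (fun θ : ℝ => θ * Real.exp (-θ * b) *
        ((XiHat K₀ θ b (sB θ) - XiHat K₀ θ a (sA θ))
          / (XiHat K₀ 0 b (sB 0) - XiHat K₀ 0 a (sA 0))))
      atTop (nhds (fhatSP K₀ b t_b / (XiHat K₀ 0 b (sB 0) - XiHat K₀ 0 a (sA 0)))) := by
  set D := XiHat K₀ 0 b (sB 0) - XiHat K₀ 0 a (sA 0) with hD
  have hB := xi_key K₀ α β hα hsmooth hconv b t_b htb₁ htb₂ hsb sB hsB
  have hA := xi_key K₀ α β hα hsmooth hconv a t_a hta₁ hta₂ hsa sA hsA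
  have hEab : Tendsto (fun θ : ℝ => Real.exp (-(θ * (b - a)))) atTop (nhds 0) := by
    apply Real.tendsto_exp_atBot.comp
    exact tendsto_neg_atTop_atBot.comp (tendsto_id.atTop_mul_const (sub_pos.mpr hab))
  have hA0 : Tendsto (fun θ : ℝ => Real.exp (-(θ * (b - a))) *
      (θ * Real.exp (-θ * a) * XiHat K₀ θ a (sA θ))) atTop
      (nhds (0 * fhatSP K₀ a t_a)) := hEab.mul hA
  have hcomb := (hB.sub hA0).div_const D
  rw [zero_mul, sub_zero] at hcomb
  apply hcomb.congr
  intro θ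
  have he : Real.exp (-θ * b) = Real.exp (-(θ * (b - a))) * Real.exp (-θ * a) := by
    rw [← Real.exp_add]; ring_nf
  rw [he]; ring
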